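/- Existence and covering-independence of the local fidelity order parameter: let ι be a type, d ≥ 1, and suppose that to every finite subset A of ι there is assigned a positive semidefinite trace-one complex matrix ρ_A indexed by functions A → Fin d, consistently under partial trace: for all finite A ⊆ B, (ρ_A)_{f,f'} = Σ_{g : (B∖A) → Fin d} (ρ_B)_{f⊔g, f'⊔g}, where f⊔g denotes the function on B restricting to f on A and to g on B∖A. Fix a finite subset S ⊆ ι and a matrix O indexed by functions S → Fin d; for a finite A ⊇ S, let O_A denote the matrix on functions A → Fin d acting as O on the S-coordinates and as the identity on the (A∖S)-coordinates. Then for every increasing sequence (A_n) of finite subsets of ι with S ⊆ A₀ and ⋃_n A_n = ι, the sequence F(ρ_{A_n}, O_{A_n} ρ_{A_n} O_{A_n}†) converges, and its limit equals the infimum of F(ρ_A, O_A ρ_A O_A†) over all finite subsets A with S ⊆ A ⊆ ι; in particular the limit is the same for every such exhausting increasing sequence. -/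

import Mathlib

noncomputable section

open scoped Matrix Kronecker ComplexOrder

/-- The positive semidefinite square root of a matrix (defaults to `0` if not PSD). -/
noncomputable def matSqrt {n : Type*} [Fintype n] [DecidableEq n] (M : Matrix n n ℂ) :
    Matrix n n ℂ :=
  open scoped Classical in
  if h : M.PosSemidef then
    (h.1.eigenvectorUnitary : Matrix n n ℂ) * Matrix.diagonal ((↑) ∘ Real.sqrt ∘ h.1.eigenvalues) *
      (star h.1.eigenvectorUnitary : Matrix n n ℂ)
  else 0

/-- The fidelity `F(ρ, σ) = tr √(√ρ σ √ρ)` of two PSD matrices. -/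
noncomputable def fidelity {n : Type*} [Fintype n] [DecidableEq n] (ρ σ : Matrix n n ℂ) : ℝ :=
  (matSqrt (matSqrt ρ * σ * matSqrt ρ)).trace.re

/-- The ℓ²→ℓ² operator norm of a complex matrix. -/
noncomputable def opNorm {m n : Type*} [Fintype m] [Fintype n] [DecidableEq n]
    (M : Matrix m n ℂ) : ℝ :=
  ‖(Matrix.toEuclideanLin.trans LinearMap.toContinuousLinearMap) M‖

/-- Partial trace over the second tensor factor. -/
noncomputable def ptraceB {A B : Type*} [Fintype B]
    (ρ : Matrix (A × B) (A × B) ℂ) : Matrix A A ℂ :=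
  Matrix.of fun a a' => ∑ b : B, ρ (a, b) (a', b)


/-- Glue a configuration on `A` with a configuration on `B \ A` to one on `B ⊇ A`. -/
def glue {ι : Type*} [DecidableEq ι] {d : ℕ} {A B : Finset ι} (h : A ⊆ B)
    (f : ↥A → Fin d) (g : ↥(B \ A) → Fin d) : ↥B → Fin d :=
  fun b => if hb : (b : ι) ∈ A then f ⟨b, hb⟩
    else g ⟨b, Finset.mem_sdiff.mpr ⟨b.2, hb⟩⟩

/-- Extend an operator supported on `S` to a region `A ⊇ S`, acting as the identity on the
remaining coordinates (junk value `0` if `S ⊄ A`). -/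
noncomputable def extendOp {ι : Type*} [DecidableEq ι] {d : ℕ} (S : Finset ι)
    (O : Matrix (↥S → Fin d) (↥S → Fin d) ℂ) (A : Finset ι) :
    Matrix (↥A → Fin d) (↥A → Fin d) ℂ :=
  open scoped Classical in
  if h : S ⊆ A then
    Matrix.of fun f f' =>
      O (fun s => f ⟨s, h s.2⟩) (fun s => f' ⟨s, h s.2⟩) *
        (if ∀ a : ↥A, (a : ι) ∉ S → f a = f' a then 1 else 0)
  else 0

open Matrix
open scoped Matrix.Norms.L2Operator InnerProductSpace

namespace LocalFid

variable {n m E A C : Type*}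

section basic
variable [Fintype n] [DecidableEq n]

open scoped MatrixOrder in
lemma matSqrt_eq {M : Matrix n n ℂ} (h : M.PosSemidef) : matSqrt M = CFC.sqrt M := by
  rw [CFC.sqrt_eq_real_sqrt M h.nonneg, cfcₙ_eq_cfc (hf0 := Real.sqrt_zero), h.1.cfc_eq]
  unfold matSqrt
  rw [dif_pos h]
  simp [Matrix.IsHermitian.cfc, Unitary.conjStarAlgAut_apply]

open scoped MatrixOrder in
lemma matSqrt_posSemidef (M : Matrix n n ℂ) : (matSqrt M).PosSemidef := by
  by_cases h : M.PosSemidef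
  · rw [matSqrt_eq h]; exact (CFC.sqrt_nonneg M).posSemidef
  · unfold matSqrt
    rw [dif_neg h]
    exact Matrix.PosSemidef.zero

open scoped MatrixOrder in
lemma matSqrt_mul_self {M : Matrix n n ℂ} (h : M.PosSemidef) : matSqrt M * matSqrt M = M := by
  rw [matSqrt_eq h]; exact CFC.sqrt_mul_sqrt_self M h.nonneg

lemma matSqrt_herm (M : Matrix n n ℂ) : (matSqrt M)ᴴ = matSqrt M :=
  (matSqrt_posSemidef M).isHermitian

lemma trace_re_nonneg {M : Matrix n n ℂ} (h : M.PosSemidef) : 0 ≤ M.trace.re := by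
  have h1 : ∀ i, 0 ≤ (M i i).re := by
    intro i
    have := h.re_dotProduct_nonneg (Pi.single i 1)
    simpa [dotProduct, Matrix.mulVec, Pi.single_apply] using this
  rw [Matrix.trace, Complex.re_sum]
  exact Finset.sum_nonneg fun i _ => h1 i

lemma fidelity_nonneg (ρ σ : Matrix n n ℂ) : 0 ≤ fidelity ρ σ :=
  trace_re_nonneg (matSqrt_posSemidef _)

end basic

end LocalFid
namespace LocalFid
section analysis
variable [Fintype n] [DecidableEq n] [Fintype m] [DecidableEq m]

lemma tEL_mul {l : Type*} [Fintype l] (M : Matrix l m ℂ) (N : Matrix m n ℂ)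
    (x : EuclideanSpace ℂ n) :
    Matrix.toEuclideanLin (M * N) x = Matrix.toEuclideanLin M (Matrix.toEuclideanLin N x) := by
  simp [Matrix.toEuclideanLin_apply, Matrix.mulVec_mulVec]

lemma inner_tEL (M : Matrix m n ℂ) (x : EuclideanSpace ℂ n) :
    (inner ℂ (Matrix.toEuclideanLin M x) (Matrix.toEuclideanLin M x) : ℂ)
      = inner ℂ x (Matrix.toEuclideanLin (Mᴴ * M) x) := by
  rw [tEL_mul, Matrix.toEuclideanLin_conjTranspose_eq_adjoint, LinearMap.adjoint_inner_right]

lemma norm_tEL_eq_of_gram {P : Matrix n n ℂ} {N : Matrix m n ℂ}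
    (h : Nᴴ * N = Pᴴ * P) (x : EuclideanSpace ℂ n) :
    ‖Matrix.toEuclideanLin N x‖ = ‖Matrix.toEuclideanLin P x‖ := by
  have h1 := inner_tEL N x
  rw [h, ← inner_tEL P x] at h1
  rw [← sq_eq_sq₀ (norm_nonneg _) (norm_nonneg _), ← inner_self_eq_norm_sq (𝕜 := ℂ),
    ← inner_self_eq_norm_sq (𝕜 := ℂ), h1]

/-- There is an isometry from the range of `toEuclideanLin P` carrying `P x` to `N x`,
whenever `N` and `P` have the same Gram matrix. -/
lemma exists_isometry {P : Matrix n n ℂ} {N : Matrix m n ℂ}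
    (h : Nᴴ * N = Pᴴ * P) :
    ∃ L : (LinearMap.range (Matrix.toEuclideanLin P)) →ₗᵢ[ℂ] EuclideanSpace ℂ m,
      ∀ x : EuclideanSpace ℂ n,
        L ⟨Matrix.toEuclideanLin P x, LinearMap.mem_range_self _ x⟩
          = Matrix.toEuclideanLin N x := by
  set p := Matrix.toEuclideanLin P with hp
  set nl := Matrix.toEuclideanLin N with hn
  have hnorm : ∀ x, ‖nl x‖ = ‖p x‖ := norm_tEL_eq_of_gram h
  have hker : LinearMap.ker p ≤ LinearMap.ker nl := by
    intro x hx
    rw [LinearMap.mem_ker] at hx ⊢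
    have := hnorm x
    rw [hx, norm_zero, norm_eq_zero] at this
    exact this
  let L0 : (LinearMap.range p) →ₗ[ℂ] EuclideanSpace ℂ m :=
    (Submodule.liftQ (LinearMap.ker p) nl hker).comp
      (LinearMap.quotKerEquivRange p).symm.toLinearMap
  have hL0 : ∀ x, L0 ⟨p x, LinearMap.mem_range_self _ x⟩ = nl x := by
    intro x
    have h1 : (LinearMap.quotKerEquivRange p).symm ⟨p x, LinearMap.mem_range_self _ x⟩
        = Submodule.Quotient.mk x := by
      rw [LinearEquiv.symm_apply_eq]
      exact Subtype.ext (LinearMap.quotKerEquivRange_apply_mk p x).symm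
    simp only [L0, LinearMap.comp_apply, LinearEquiv.coe_toLinearMap, h1]
    exact Submodule.liftQ_apply _ _ _
  have hnm : ∀ y : LinearMap.range p, ‖L0 y‖ = ‖y‖ := by
    rintro ⟨y, x, rfl⟩
    rw [hL0 x]
    exact hnorm x
  exact ⟨⟨L0, hnm⟩, hL0⟩

/-- Right polar decomposition: `M = W √(MᴴM)` with `W` unitary. -/
lemma polar_exists (M : Matrix n n ℂ) :
    ∃ W : Matrix n n ℂ, Wᴴ * W = 1 ∧ W * Wᴴ = 1 ∧ M = W * matSqrt (Mᴴ * M) := by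
  set P := matSqrt (Mᴴ * M) with hPdef
  have hPP : Pᴴ * P = Mᴴ * M := by
    rw [matSqrt_herm]
    exact matSqrt_mul_self (Matrix.posSemidef_conjTranspose_mul_self M)
  obtain ⟨L, hL⟩ := exists_isometry (P := P) (N := M) hPP.symm
  have : FiniteDimensional ℂ (EuclideanSpace ℂ n) := by infer_instance
  set Wiso := L.extend with hW
  set W : Matrix n n ℂ := Matrix.toEuclideanLin.symm Wiso.toLinearMap with hWdef
  have hWapp : ∀ x, Matrix.toEuclideanLin W x = Wiso x := by
    intro x
    rw [hWdef, LinearEquiv.apply_symm_apply]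
    rfl
  have hMWP : M = W * P := by
    apply Matrix.toEuclideanLin.injective
    apply LinearMap.ext
    intro x
    rw [tEL_mul, hWapp]
    have h2 : Matrix.toEuclideanLin P x
        = ((⟨Matrix.toEuclideanLin P x, LinearMap.mem_range_self _ x⟩ :
            LinearMap.range (Matrix.toEuclideanLin P)) : EuclideanSpace ℂ n) := rfl
    rw [h2, LinearIsometry.extend_apply, hL]
  have hWW : Wᴴ * W = 1 := by
    ext i j
    have h3 : ∀ k : n, (Matrix.toEuclideanLin W (EuclideanSpace.single k 1)) =
        (WithLp.equiv 2 (n → ℂ)).symm (W *ᵥ Pi.single k 1) := by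
      intro k
      rw [Matrix.toEuclideanLin_apply]
      rfl
    have h4 := Wiso.inner_map_map (EuclideanSpace.single i 1) (EuclideanSpace.single j 1)
    rw [← hWapp, ← hWapp, h3 i, h3 j] at h4
    have h5 : (inner ℂ ((WithLp.equiv 2 (n → ℂ)).symm (W *ᵥ Pi.single i 1))
        ((WithLp.equiv 2 (n → ℂ)).symm (W *ᵥ Pi.single j 1)) : ℂ)
        = (Wᴴ * W) i j := by
      rw [EuclideanSpace.inner_eq_star_dotProduct]
      simp [Matrix.mul_apply, dotProduct, Matrix.mulVec_single, Matrix.conjTranspose_apply,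
        mul_comm]
    have h6 : (inner ℂ (EuclideanSpace.single i (1:ℂ)) (EuclideanSpace.single j (1:ℂ)) : ℂ)
        = (1 : Matrix n n ℂ) i j := by
      rw [EuclideanSpace.inner_single_left]
      simp [EuclideanSpace.single_apply, Matrix.one_apply, eq_comm]
    rw [← h5, h4, h6]
  refine ⟨W, hWW, mul_eq_one_comm.mp hWW, hMWP⟩

end analysis
end LocalFid
namespace LocalFid
section analysis2
variable [Fintype n] [DecidableEq n] [Fintype m] [DecidableEq m]
open scoped Matrix.Norms.L2Operator

/-- Contraction factorization: `Ψ = √(ΨΨᴴ) K` with `‖K‖ ≤ 1`. -/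
lemma contraction_factor (Ψ : Matrix n m ℂ) :
    ∃ K : Matrix n m ℂ, ‖K‖ ≤ 1 ∧ Ψ = matSqrt (Ψ * Ψᴴ) * K := by
  set P := matSqrt (Ψ * Ψᴴ) with hPdef
  have hPP : (Ψᴴ)ᴴ * Ψᴴ = Pᴴ * P := by
    rw [matSqrt_herm, conjTranspose_conjTranspose]
    exact (matSqrt_mul_self (Matrix.posSemidef_self_mul_conjTranspose Ψ)).symm
  obtain ⟨L, hL⟩ := exists_isometry (P := P) (N := Ψᴴ) hPP
  have : CompleteSpace (LinearMap.range (Matrix.toEuclideanLin P)) :=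
    FiniteDimensional.complete ℂ _
  set U : EuclideanSpace ℂ n →ₗ[ℂ] EuclideanSpace ℂ m :=
    L.toLinearMap.comp (Submodule.orthogonalProjection (LinearMap.range (Matrix.toEuclideanLin P))).toLinearMap with hU
  set Umat : Matrix m n ℂ := Matrix.toEuclideanLin.symm U with hUmat
  have hUapp : ∀ x, Matrix.toEuclideanLin Umat x = U x := by
    intro x; rw [hUmat, LinearEquiv.apply_symm_apply]
  have hfac : Ψᴴ = Umat * P := by
    apply Matrix.toEuclideanLin.injective
    apply LinearMap.ext
    intro x
    rw [tEL_mul, hUapp]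
    have h2 : Submodule.orthogonalProjection (LinearMap.range (Matrix.toEuclideanLin P)) (Matrix.toEuclideanLin P x)
        = ⟨Matrix.toEuclideanLin P x, LinearMap.mem_range_self _ x⟩ :=
      Submodule.orthogonalProjection_mem_subspace_eq_self
        (⟨Matrix.toEuclideanLin P x, LinearMap.mem_range_self _ x⟩ : LinearMap.range (Matrix.toEuclideanLin P))
    simp only [hU, LinearMap.comp_apply, ContinuousLinearMap.coe_coe, h2]
    rw [← hL x]
    rfl
  have hnormU : ‖Umat‖ ≤ 1 := by
    rw [Matrix.l2_opNorm_def]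
    apply ContinuousLinearMap.opNorm_le_bound _ zero_le_one
    intro x
    have h3 : (Matrix.toEuclideanLin.trans LinearMap.toContinuousLinearMap Umat) x = U x := by
      simpa using hUapp x
    rw [h3, one_mul]
    simp only [hU, LinearMap.comp_apply, ContinuousLinearMap.coe_coe, LinearIsometry.coe_toLinearMap,
      LinearIsometry.norm_map]
    calc ‖(Submodule.orthogonalProjection (LinearMap.range (Matrix.toEuclideanLin P)) x : EuclideanSpace ℂ n)‖
        ≤ ‖Submodule.orthogonalProjection (LinearMap.range (Matrix.toEuclideanLin P))‖ * ‖x‖ := by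
          simpa using (Submodule.orthogonalProjection (LinearMap.range (Matrix.toEuclideanLin P))).le_opNorm x
      _ ≤ 1 * ‖x‖ := by
          exact mul_le_mul_of_nonneg_right
            (Submodule.orthogonalProjection_norm_le (LinearMap.range (Matrix.toEuclideanLin P))) (norm_nonneg x)
      _ = ‖x‖ := one_mul _
  refine ⟨Umatᴴ, ?_, ?_⟩
  · rw [Matrix.l2_opNorm_conjTranspose]; exact hnormU
  · calc Ψ = (Ψᴴ)ᴴ := (conjTranspose_conjTranspose Ψ).symm
      _ = (Umat * P)ᴴ := by rw [hfac]
      _ = Pᴴ * Umatᴴ := by rw [Matrix.conjTranspose_mul]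
      _ = matSqrt (Ψ * Ψᴴ) * Umatᴴ := by rw [matSqrt_herm]

lemma norm_one_le : ‖(1 : Matrix n n ℂ)‖ ≤ 1 := by
  rw [Matrix.cstar_norm_def, _root_.map_one]
  exact ContinuousLinearMap.norm_id_le

lemma unitary_norm_le {W : Matrix n n ℂ} (h : Wᴴ * W = 1) : ‖W‖ ≤ 1 := by
  have h1 : ‖W‖ * ‖W‖ ≤ 1 := by
    rw [← Matrix.l2_opNorm_conjTranspose_mul_self, h]
    exact norm_one_le
  have h0 : (0:ℝ) ≤ ‖W‖ := norm_nonneg _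
  nlinarith

/-- The key trace inequality: `Re tr (Q P) ≤ tr P` for `P` PSD and `Q` a contraction. -/
lemma re_trace_contraction {P Q : Matrix n n ℂ} (hP : P.PosSemidef) (hQ : ‖Q‖ ≤ 1) :
    ((Q * P).trace).re ≤ P.trace.re := by
  set R := matSqrt P with hR
  have hRR : R * R = P := matSqrt_mul_self hP
  have h1 : (Q * P).trace = (R * (Q * R)).trace := by
    rw [← hRR, ← Matrix.mul_assoc, Matrix.trace_mul_comm (Q * R) R]
  set c : n → EuclideanSpace ℂ n := fun i => (WithLp.equiv 2 (n → ℂ)).symm (fun j => R j i)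
    with hc
  have hRt : ∀ i j, R i j = starRingEnd ℂ (R j i) := fun i j => by
    have h := (matSqrt_posSemidef P).isHermitian.apply i j
    simpa using h.symm
  have hentry : ∀ i, (R * (Q * R)) i i = inner ℂ (c i) (Matrix.toEuclideanLin Q (c i)) := by
    intro i
    rw [EuclideanSpace.inner_eq_star_dotProduct, dotProduct_comm]
    have e2 : (Matrix.toEuclideanLin Q (c i)).ofLp
        = Q *ᵥ (fun j => R j i) := by
      rfl
    have e1 : (c i).ofLp = fun j => R j i := rfl
    rw [e1, e2]
    simp only [Matrix.mul_apply, dotProduct, Matrix.mulVec, Pi.star_apply,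
      RCLike.star_def]
    exact Finset.sum_congr rfl fun j _ => by rw [hRt i j]
  have hnc : ∀ i, ‖c i‖ ^ 2 = (P i i).re := by
    intro i
    rw [← inner_self_eq_norm_sq (𝕜 := ℂ), EuclideanSpace.inner_eq_star_dotProduct]
    have : (dotProduct ((c i).ofLp)
        (star (c i).ofLp)) = (Rᴴ * R) i i := by
      simp [Matrix.mul_apply, dotProduct, Matrix.conjTranspose_apply, hc, mul_comm]
    rw [this, matSqrt_herm, hRR]
    rfl
  have hterm : ∀ i, ((R * (Q * R)) i i).re ≤ (P i i).re := by
    intro i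
    rw [hentry i]
    calc (inner ℂ (c i) (Matrix.toEuclideanLin Q (c i)) : ℂ).re
        ≤ ‖(inner ℂ (c i) (Matrix.toEuclideanLin Q (c i)) : ℂ)‖ := Complex.re_le_norm _
      _ ≤ ‖c i‖ * ‖Matrix.toEuclideanLin Q (c i)‖ := norm_inner_le_norm _ _
      _ ≤ ‖c i‖ * (‖Q‖ * ‖c i‖) := by
          apply mul_le_mul_of_nonneg_left _ (norm_nonneg _)
          simpa [Matrix.toEuclideanLin_apply] using Matrix.l2_opNorm_mulVec Q (c i)
      _ ≤ ‖c i‖ * (1 * ‖c i‖) := by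
          apply mul_le_mul_of_nonneg_left _ (norm_nonneg _)
          exact mul_le_mul_of_nonneg_right hQ (norm_nonneg _)
      _ = ‖c i‖ ^ 2 := by ring
      _ = (P i i).re := hnc i
  rw [h1, Matrix.trace, Matrix.trace, Complex.re_sum, Complex.re_sum]
  exact Finset.sum_le_sum fun i _ => hterm i

end analysis2
end LocalFid
namespace LocalFid
section uhlmann
variable [Fintype n] [DecidableEq n]
open scoped Matrix.Norms.L2Operator

/-- Easy half of Uhlmann's theorem. -/
lemma easy_half {A E : Type*} [Fintype A] [DecidableEq A] [Fintype E] [DecidableEq E]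
    (Ψ Φ : Matrix A E ℂ) :
    ((Φ * Ψᴴ).trace).re ≤ fidelity (Ψ * Ψᴴ) (Φ * Φᴴ) := by
  obtain ⟨K, hK, hΨ⟩ := contraction_factor Ψ
  obtain ⟨K', hK', hΦ⟩ := contraction_factor Φ
  set R := matSqrt (Ψ * Ψᴴ) with hRdef
  set Sm := matSqrt (Φ * Φᴴ) with hSdef
  have hRh : Rᴴ = R := matSqrt_herm _
  have hSh : Smᴴ = Sm := matSqrt_herm _
  have hSS : Sm * Sm = Φ * Φᴴ := matSqrt_mul_self (Matrix.posSemidef_self_mul_conjTranspose Φ)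
  set N := R * Sm with hNdef
  have hNN : N * Nᴴ = R * (Φ * Φᴴ) * R := by
    rw [hNdef, Matrix.conjTranspose_mul, hRh, hSh, ← hSS]
    simp only [Matrix.mul_assoc]
  have hfid : fidelity (Ψ * Ψᴴ) (Φ * Φᴴ) = (matSqrt (N * Nᴴ)).trace.re := by
    rw [show fidelity (Ψ * Ψᴴ) (Φ * Φᴴ) =
      (matSqrt (matSqrt (Ψ * Ψᴴ) * (Φ * Φᴴ) * matSqrt (Ψ * Ψᴴ))).trace.re from rfl,
      ← hRdef, ← hNN]
  obtain ⟨W, hW1, hW2, hWN⟩ := polar_exists Nᴴ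
  rw [Matrix.conjTranspose_conjTranspose] at hWN
  set G := matSqrt (N * Nᴴ) with hGdef
  have hGh : Gᴴ = G := matSqrt_herm _
  have hNdec : N = G * Wᴴ := by
    calc N = (Nᴴ)ᴴ := (Matrix.conjTranspose_conjTranspose N).symm
      _ = (W * G)ᴴ := by rw [← hWN]
      _ = Gᴴ * Wᴴ := Matrix.conjTranspose_mul _ _
      _ = G * Wᴴ := by rw [hGh]
  have htr : (Φ * Ψᴴ).trace = ((Wᴴ * (K' * Kᴴ)) * G).trace := by
    have e2 : Φ * Ψᴴ = Sm * (K' * Kᴴ) * R := by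
      rw [hΨ, hΦ, Matrix.conjTranspose_mul, hRh]
      simp only [Matrix.mul_assoc]
    have e3 : R * (Sm * (K' * Kᴴ)) = G * (Wᴴ * (K' * Kᴴ)) := by
      have e4 : R * (Sm * (K' * Kᴴ)) = N * (K' * Kᴴ) := by
        rw [hNdef]; simp only [Matrix.mul_assoc]
      rw [e4, hNdec]; simp only [Matrix.mul_assoc]
    rw [e2, Matrix.trace_mul_comm, e3, Matrix.trace_mul_comm]
  have hQ : ‖Wᴴ * (K' * Kᴴ)‖ ≤ 1 := by
    have hWn : ‖Wᴴ‖ ≤ 1 := by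
      apply unitary_norm_le
      rw [Matrix.conjTranspose_conjTranspose]
      exact hW2
    have hKn : ‖Kᴴ‖ ≤ 1 := by rw [Matrix.l2_opNorm_conjTranspose]; exact hK
    calc ‖Wᴴ * (K' * Kᴴ)‖ ≤ ‖Wᴴ‖ * ‖K' * Kᴴ‖ := Matrix.l2_opNorm_mul _ _
      _ ≤ 1 * ‖K' * Kᴴ‖ := mul_le_mul_of_nonneg_right hWn (norm_nonneg _)
      _ = ‖K' * Kᴴ‖ := one_mul _
      _ ≤ ‖K'‖ * ‖Kᴴ‖ := Matrix.l2_opNorm_mul _ _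
      _ ≤ 1 * 1 := mul_le_mul hK' hKn (norm_nonneg _) zero_le_one
      _ = 1 := one_mul _
  rw [htr, hfid]
  exact re_trace_contraction (matSqrt_posSemidef _) hQ

/-- Hard half of Uhlmann's theorem. -/
lemma hard_half {ρ σ : Matrix n n ℂ} (hρ : ρ.PosSemidef) (hσ : σ.PosSemidef) :
    ∃ X Y : Matrix n n ℂ, X * Xᴴ = ρ ∧ Y * Yᴴ = σ ∧ ((Y * Xᴴ).trace).re = fidelity ρ σ := by
  set R := matSqrt ρ with hRdef
  set Sm := matSqrt σ with hSdef
  have hRh : Rᴴ = R := matSqrt_herm _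
  have hSh : Smᴴ = Sm := matSqrt_herm _
  have hSS : Sm * Sm = σ := matSqrt_mul_self hσ
  have hRR : R * R = ρ := matSqrt_mul_self hρ
  set M := R * Sm with hMdef
  obtain ⟨W, hW1, hW2, hWM⟩ := polar_exists Mᴴ
  rw [Matrix.conjTranspose_conjTranspose] at hWM
  set G := matSqrt (M * Mᴴ) with hGdef
  have hGh : Gᴴ = G := matSqrt_herm _
  have hMdec : M = G * Wᴴ := by
    calc M = (Mᴴ)ᴴ := (Matrix.conjTranspose_conjTranspose M).symm
      _ = (W * G)ᴴ := by rw [← hWM]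
      _ = Gᴴ * Wᴴ := Matrix.conjTranspose_mul _ _
      _ = G * Wᴴ := by rw [hGh]
  have hMM : M * Mᴴ = R * σ * R := by
    rw [hMdef, Matrix.conjTranspose_mul, hRh, hSh, ← hSS]
    simp only [Matrix.mul_assoc]
  refine ⟨R, Sm * W, ?_, ?_, ?_⟩
  · rw [hRh]; exact hRR
  · rw [Matrix.conjTranspose_mul]
    calc Sm * W * (Wᴴ * Smᴴ) = Sm * (W * Wᴴ) * Smᴴ := by simp only [Matrix.mul_assoc]
      _ = Sm * Smᴴ := by rw [hW2, Matrix.mul_one]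
      _ = σ := by rw [hSh]; exact hSS
  · have e1 : (Sm * W * Rᴴ).trace = G.trace := by
      calc (Sm * W * Rᴴ).trace = (Rᴴ * (Sm * W)).trace := Matrix.trace_mul_comm _ _
        _ = (M * W).trace := by
            congr 1
            rw [hRh, hMdef]
            simp only [Matrix.mul_assoc]
        _ = (G * (Wᴴ * W)).trace := by
            rw [hMdec]
            congr 1
            simp only [Matrix.mul_assoc]
        _ = G.trace := by rw [hW1, Matrix.mul_one]
    rw [e1]
    rw [show fidelity ρ σ = (matSqrt (matSqrt ρ * σ * matSqrt ρ)).trace.re from rfl,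
      ← hRdef, ← hMM, ← hGdef]

end uhlmann

section mono

variable {A C : Type*} [Fintype A] [DecidableEq A] [Fintype C] [DecidableEq C]

/-- Reshape an operator on a joint system as a rectangular matrix (a "purification" of its
partial trace). -/
def curry (X : Matrix (A × C) (A × C) ℂ) : Matrix A (C × (A × C)) ℂ :=
  Matrix.of fun a p => X (a, p.1) p.2

omit [DecidableEq A] [DecidableEq C] in
lemma curry_mul_conjTranspose (X Y : Matrix (A × C) (A × C) ℂ) :
    curry X * (curry Y)ᴴ = ptraceB (X * Yᴴ) := by
  ext a a'
  simp [curry, ptraceB, Matrix.mul_apply, Matrix.conjTranspose_apply, Fintype.sum_prod_type]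

omit [DecidableEq A] [DecidableEq C] in
lemma trace_curry (X Y : Matrix (A × C) (A × C) ℂ) :
    (curry Y * (curry X)ᴴ).trace = (Y * Xᴴ).trace := by
  simp only [Matrix.trace, Matrix.diag, curry, Matrix.mul_apply, Matrix.conjTranspose_apply,
    Fintype.sum_prod_type, Matrix.of_apply]

/-- Monotonicity of fidelity under the partial trace. -/
lemma fidelity_ptraceB_mono {ρ σ : Matrix (A × C) (A × C) ℂ}
    (hρ : ρ.PosSemidef) (hσ : σ.PosSemidef) :
    fidelity ρ σ ≤ fidelity (ptraceB ρ) (ptraceB σ) := by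
  obtain ⟨X, Y, hX, hY, htr⟩ := hard_half hρ hσ
  have h1 : curry X * (curry X)ᴴ = ptraceB ρ := by rw [curry_mul_conjTranspose, hX]
  have h2 : curry Y * (curry Y)ᴴ = ptraceB σ := by rw [curry_mul_conjTranspose, hY]
  calc fidelity ρ σ = ((Y * Xᴴ).trace).re := htr.symm
    _ = ((curry Y * (curry X)ᴴ).trace).re := by rw [trace_curry]
    _ ≤ fidelity (curry X * (curry X)ᴴ) (curry Y * (curry Y)ᴴ) := easy_half _ _
    _ = fidelity (ptraceB ρ) (ptraceB σ) := by rw [h1, h2]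

end mono
end LocalFid
namespace LocalFid
section reindex
variable {α β : Type*} [Fintype α] [DecidableEq α] [Fintype β] [DecidableEq β]

lemma trace_submatrix_equiv (M : Matrix β β ℂ) (e : α ≃ β) :
    (M.submatrix e e).trace = M.trace := by
  simp only [Matrix.trace, Matrix.diag, Matrix.submatrix_apply]
  exact Fintype.sum_equiv e _ _ (fun i => rfl)

lemma matSqrt_submatrix (M : Matrix β β ℂ) (e : α ≃ β) :
    matSqrt (M.submatrix e e) = (matSqrt M).submatrix e e := by
  by_cases h : M.PosSemidef
  · have h2 : (M.submatrix e e).PosSemidef := h.submatrix e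
    rw [matSqrt_eq h2]
    open scoped MatrixOrder in
    exact CFC.sqrt_unique (by rw [Matrix.submatrix_mul_equiv, matSqrt_mul_self h])
      ((matSqrt_posSemidef M).submatrix e).nonneg
  · have h2 : ¬ (M.submatrix e e).PosSemidef := fun hc =>
      h ((Matrix.posSemidef_submatrix_equiv e).mp hc)
    unfold matSqrt
    rw [dif_neg h, dif_neg h2]
    ext i j
    simp
  
lemma fidelity_submatrix (ρ σ : Matrix β β ℂ) (e : α ≃ β) :
    fidelity (ρ.submatrix e e) (σ.submatrix e e) = fidelity ρ σ := by
  unfold fidelity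
  rw [matSqrt_submatrix ρ e, Matrix.submatrix_mul_equiv, Matrix.submatrix_mul_equiv,
    matSqrt_submatrix _ e, trace_submatrix_equiv]

end reindex

section kron
open scoped Kronecker
variable {A C : Type*} [Fintype A] [DecidableEq A] [Fintype C] [DecidableEq C]

lemma kron_one_mul_apply (M : Matrix A A ℂ) (τ : Matrix (A × C) (A × C) ℂ)
    (a : A) (c : C) (q : A × C) :
    ((M ⊗ₖ (1 : Matrix C C ℂ)) * τ) (a, c) q = ∑ x : A, M a x * τ (x, c) q := by
  rw [Matrix.mul_apply, Fintype.sum_prod_type]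
  apply Finset.sum_congr rfl
  intro x _
  simp [Matrix.one_apply, ite_mul, mul_ite, Finset.sum_ite_eq']

lemma mul_kron_one_apply (N : Matrix A A ℂ) (τ : Matrix (A × C) (A × C) ℂ)
    (p : A × C) (a' : A) (c : C) :
    (τ * (N ⊗ₖ (1 : Matrix C C ℂ))) p (a', c) = ∑ x : A, τ p (x, c) * N x a' := by
  rw [Matrix.mul_apply, Fintype.sum_prod_type]
  apply Finset.sum_congr rfl
  intro x _
  simp [Matrix.one_apply, ite_mul, mul_ite, Finset.sum_ite_eq']

lemma ptraceB_kron_conj (M N : Matrix A A ℂ) (τ : Matrix (A × C) (A × C) ℂ) :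
    ptraceB ((M ⊗ₖ (1 : Matrix C C ℂ)) * τ * (N ⊗ₖ (1 : Matrix C C ℂ)))
      = M * ptraceB τ * N := by
  ext a a'
  show ∑ c : C, ((M ⊗ₖ (1 : Matrix C C ℂ)) * τ * (N ⊗ₖ (1 : Matrix C C ℂ))) (a, c) (a', c) = _
  have e1 : ∀ c : C, ((M ⊗ₖ (1 : Matrix C C ℂ)) * τ * (N ⊗ₖ (1 : Matrix C C ℂ))) (a, c) (a', c)
      = ∑ x : A, ∑ x' : A, M a x * (τ (x, c) (x', c) * N x' a') := by
    intro c
    rw [Matrix.mul_assoc, kron_one_mul_apply]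
    apply Finset.sum_congr rfl
    intro x _
    rw [mul_kron_one_apply, Finset.mul_sum]
  simp only [e1]
  rw [Finset.sum_comm, Matrix.mul_assoc, Matrix.mul_apply]
  apply Finset.sum_congr rfl
  intro x _
  rw [Finset.sum_comm, Matrix.mul_apply, Finset.mul_sum]
  apply Finset.sum_congr rfl
  intro x' _
  rw [show (ptraceB τ) x x' = ∑ c : C, τ (x, c) (x', c) from rfl, Finset.sum_mul,
    Finset.mul_sum]

end kron
end LocalFid
namespace LocalFid
section gluesec
variable {ι : Type*} [DecidableEq ι] {d : ℕ}

/-- Gluing configurations is a bijection. -/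
def glueEquiv {A B : Finset ι} (h : A ⊆ B) :
    ((↥A → Fin d) × (↥(B \ A) → Fin d)) ≃ (↥B → Fin d) where
  toFun p := glue h p.1 p.2
  invFun f := (fun a => f ⟨a, h a.2⟩, fun c => f ⟨c, (Finset.mem_sdiff.mp c.2).1⟩)
  left_inv := by
    rintro ⟨f, g⟩
    refine Prod.ext ?_ ?_ <;> funext x
    · show glue h f g ⟨x, h x.2⟩ = f x
      simp only [glue]
      rw [dif_pos x.2]
    · show glue h f g ⟨x, (Finset.mem_sdiff.mp x.2).1⟩ = g x
      simp only [glue]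
      rw [dif_neg (Finset.mem_sdiff.mp x.2).2]
  right_inv := by
    intro f
    funext b
    simp only [glue]
    by_cases hb : (b : ι) ∈ A
    · rw [dif_pos hb]
    · rw [dif_neg hb]

lemma glueEquiv_apply {A B : Finset ι} (h : A ⊆ B) (f : ↥A → Fin d) (g : ↥(B \ A) → Fin d) :
    glueEquiv h (f, g) = glue h f g := rfl

lemma glue_mem_A {A B : Finset ι} (h : A ⊆ B) (f : ↥A → Fin d) (g : ↥(B \ A) → Fin d)
    (b : ↥B) (hb : (b : ι) ∈ A) : glue h f g b = f ⟨b, hb⟩ := by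
  simp only [glue]
  rw [dif_pos hb]

lemma glue_not_mem_A {A B : Finset ι} (h : A ⊆ B) (f : ↥A → Fin d) (g : ↥(B \ A) → Fin d)
    (b : ↥B) (hb : (b : ι) ∉ A) :
    glue h f g b = g ⟨b, Finset.mem_sdiff.mpr ⟨b.2, hb⟩⟩ := by
  simp only [glue]
  rw [dif_neg hb]

lemma extendOp_submatrix {S A B : Finset ι} (hSA : S ⊆ A) (hAB : A ⊆ B)
    (O : Matrix (↥S → Fin d) (↥S → Fin d) ℂ) :
    (extendOp S O B).submatrix (glueEquiv (d := d) hAB) (glueEquiv hAB)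
      = (extendOp S O A) ⊗ₖ (1 : Matrix (↥(B \ A) → Fin d) (↥(B \ A) → Fin d) ℂ) := by
  classical
  have hSB : S ⊆ B := hSA.trans hAB
  ext ⟨f, g⟩ ⟨f', g'⟩
  simp only [Matrix.submatrix_apply, Matrix.kroneckerMap_apply, extendOp, dif_pos hSB,
    dif_pos hSA, Matrix.of_apply, glueEquiv_apply, Matrix.one_apply]
  have hres : ∀ (f : ↥A → Fin d) (g : ↥(B \ A) → Fin d),
      (fun s : ↥S => glue hAB f g ⟨(s : ι), hSB s.2⟩) = (fun s : ↥S => f ⟨(s : ι), hSA s.2⟩) := by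
    intro f g
    funext s
    exact glue_mem_A hAB f g ⟨(s : ι), hSB s.2⟩ (hSA s.2)
  have hind : (∀ b : ↥B, (b : ι) ∉ S → glue hAB f g b = glue hAB f' g' b)
      ↔ ((∀ a : ↥A, (a : ι) ∉ S → f a = f' a) ∧ g = g') := by
    constructor
    · intro H
      constructor
      · intro a ha
        have h2 := H ⟨(a : ι), hAB a.2⟩ ha
        rw [glue_mem_A hAB f g _ a.2, glue_mem_A hAB f' g' _ a.2] at h2
        simpa using h2
      · funext c
        have hcB : (c : ι) ∈ B := (Finset.mem_sdiff.mp c.2).1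
        have hcA : (c : ι) ∉ A := (Finset.mem_sdiff.mp c.2).2
        have hcS : (c : ι) ∉ S := fun hs => hcA (hSA hs)
        have h2 := H ⟨(c : ι), hcB⟩ hcS
        rw [glue_not_mem_A hAB f g _ hcA, glue_not_mem_A hAB f' g' _ hcA] at h2
        simpa using h2
    · rintro ⟨h1, rfl⟩ b hbS
      by_cases hb : (b : ι) ∈ A
      · rw [glue_mem_A hAB f g b hb, glue_mem_A hAB f' g b hb]
        exact h1 ⟨(b : ι), hb⟩ hbS
      · rw [glue_not_mem_A hAB f g b hb, glue_not_mem_A hAB f' g b hb]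
  rw [hres f g, hres f' g']
  by_cases hgg : g = g'
  · by_cases hff : ∀ a : ↥A, (a : ι) ∉ S → f a = f' a
    · rw [if_pos (hind.mpr ⟨hff, hgg⟩), if_pos hff, if_pos hgg]
      ring
    · rw [if_neg (fun hc => hff (hind.mp hc).1), if_neg hff]
      ring
  · rw [if_neg (fun hc => hgg (hind.mp hc).2), if_neg hgg]
    ring

lemma extendOp_conjTranspose_submatrix {S A B : Finset ι} (hSA : S ⊆ A) (hAB : A ⊆ B)
    (O : Matrix (↥S → Fin d) (↥S → Fin d) ℂ) :
    ((extendOp S O B)ᴴ).submatrix (glueEquiv (d := d) hAB) (glueEquiv hAB)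
      = ((extendOp S O A)ᴴ) ⊗ₖ (1 : Matrix (↥(B \ A) → Fin d) (↥(B \ A) → Fin d) ℂ) := by
  rw [← Matrix.conjTranspose_submatrix, extendOp_submatrix hSA hAB]
  ext ⟨f, g⟩ ⟨f', g'⟩
  simp only [Matrix.conjTranspose_apply, Matrix.kroneckerMap_apply, Matrix.one_apply]
  by_cases hc : g = g'
  · subst hc
    simp
  · rw [if_neg hc, if_neg (fun hcc => hc hcc.symm)]
    simp

end gluesec
end LocalFid
namespace LocalFid
section main
open scoped Kronecker
variable {ι : Type*} [DecidableEq ι] {d : ℕ}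

lemma kron_one_conjTranspose {A C : Type*} [Fintype A] [Fintype C] [DecidableEq C]
    (X : Matrix A A ℂ) :
    (X ⊗ₖ (1 : Matrix C C ℂ))ᴴ = Xᴴ ⊗ₖ (1 : Matrix C C ℂ) := by
  ext ⟨f, g⟩ ⟨f', g'⟩
  simp only [Matrix.conjTranspose_apply, Matrix.kroneckerMap_apply, Matrix.one_apply]
  by_cases hc : g = g'
  · subst hc
    simp
  · rw [if_neg hc, if_neg (fun hcc => hc hcc.symm)]
    simp

lemma fidelity_mono
    (ρ : ∀ A : Finset ι, Matrix (↥A → Fin d) (↥A → Fin d) ℂ)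
    (hpsd : ∀ A, (ρ A).PosSemidef)
    (hcons : ∀ (A B : Finset ι) (h : A ⊆ B) (f f' : ↥A → Fin d),
      ρ A f f' = ∑ g : ↥(B \ A) → Fin d, ρ B (glue h f g) (glue h f' g))
    (S : Finset ι) (O : Matrix (↥S → Fin d) (↥S → Fin d) ℂ)
    {A B : Finset ι} (hSA : S ⊆ A) (hAB : A ⊆ B) :
    fidelity (ρ B) (extendOp S O B * ρ B * (extendOp S O B)ᴴ)
      ≤ fidelity (ρ A) (extendOp S O A * ρ A * (extendOp S O A)ᴴ) := by
  set e := glueEquiv (d := d) hAB with he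
  set τ := (ρ B).submatrix e e with hτ
  have hτpsd : τ.PosSemidef := (hpsd B).submatrix e
  have hOsub : (extendOp S O B).submatrix e e
      = (extendOp S O A) ⊗ₖ (1 : Matrix (↥(B \ A) → Fin d) (↥(B \ A) → Fin d) ℂ) :=
    extendOp_submatrix hSA hAB O
  have hOHsub : ((extendOp S O B)ᴴ).submatrix e e
      = ((extendOp S O A)ᴴ) ⊗ₖ (1 : Matrix (↥(B \ A) → Fin d) (↥(B \ A) → Fin d) ℂ) :=
    extendOp_conjTranspose_submatrix hSA hAB O
  have hconv : (extendOp S O B * ρ B * (extendOp S O B)ᴴ).submatrix e e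
      = ((extendOp S O A) ⊗ₖ (1 : Matrix (↥(B \ A) → Fin d) (↥(B \ A) → Fin d) ℂ)) * τ *
        (((extendOp S O A)ᴴ) ⊗ₖ (1 : Matrix (↥(B \ A) → Fin d) (↥(B \ A) → Fin d) ℂ)) := by
    rw [← Matrix.submatrix_mul_equiv (extendOp S O B * ρ B) ((extendOp S O B)ᴴ) ⇑e e ⇑e,
      ← Matrix.submatrix_mul_equiv (extendOp S O B) (ρ B) ⇑e e ⇑e, hOsub, hOHsub, hτ]
  have hptr_tau : ptraceB τ = ρ A := by
    ext f f'
    show ∑ g : ↥(B \ A) → Fin d, τ (f, g) (f', g) = ρ A f f'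
    exact (hcons A B hAB f f').symm
  have hpsd2 : (((extendOp S O A) ⊗ₖ (1 : Matrix (↥(B \ A) → Fin d) (↥(B \ A) → Fin d) ℂ)) * τ *
      (((extendOp S O A)ᴴ) ⊗ₖ (1 : Matrix (↥(B \ A) → Fin d) (↥(B \ A) → Fin d) ℂ))).PosSemidef := by
    rw [← kron_one_conjTranspose]
    exact hτpsd.mul_mul_conjTranspose_same _
  calc fidelity (ρ B) (extendOp S O B * ρ B * (extendOp S O B)ᴴ)
      = fidelity τ (((extendOp S O A) ⊗ₖ (1 : Matrix (↥(B \ A) → Fin d) (↥(B \ A) → Fin d) ℂ)) * τ *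
          (((extendOp S O A)ᴴ) ⊗ₖ (1 : Matrix (↥(B \ A) → Fin d) (↥(B \ A) → Fin d) ℂ))) := by
        rw [hτ, ← hconv, fidelity_submatrix]
    _ ≤ fidelity (ptraceB τ)
          (ptraceB (((extendOp S O A) ⊗ₖ (1 : Matrix (↥(B \ A) → Fin d) (↥(B \ A) → Fin d) ℂ)) * τ *
            (((extendOp S O A)ᴴ) ⊗ₖ (1 : Matrix (↥(B \ A) → Fin d) (↥(B \ A) → Fin d) ℂ)))) :=
        fidelity_ptraceB_mono hτpsd hpsd2
    _ = fidelity (ρ A) (extendOp S O A * ρ A * (extendOp S O A)ᴴ) := by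
        rw [ptraceB_kron_conj, hptr_tau]

end main
end LocalFid


/-- **Existence and covering-independence of the local fidelity order parameter**
(Theorem 5): along any exhausting increasing sequence of finite regions containing `S`,
the one-point local fidelity correlator converges, to the infimum over all finite regions
containing `S`; in particular the limit does not depend on the chosen covering. -/
theorem local_fidelity_order_parameter_covering_limit
    {ι : Type*} [DecidableEq ι] {d : ℕ} (hd : 1 ≤ d)
    (ρ : ∀ A : Finset ι, Matrix (↥A → Fin d) (↥A → Fin d) ℂ)
    (hpsd : ∀ A, (ρ A).PosSemidef) (htr : ∀ A, (ρ A).trace = 1)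
    (hcons : ∀ (A B : Finset ι) (h : A ⊆ B) (f f' : ↥A → Fin d),
      ρ A f f' = ∑ g : ↥(B \ A) → Fin d, ρ B (glue h f g) (glue h f' g))
    (S : Finset ι) (O : Matrix (↥S → Fin d) (↥S → Fin d) ℂ)
    (A : ℕ → Finset ι) (hchain : ∀ n, A n ⊆ A (n + 1)) (hS0 : S ⊆ A 0)
    (hexh : ∀ i : ι, ∃ n, i ∈ A n) :
    Filter.Tendsto
      (fun n => fidelity (ρ (A n))
        (extendOp S O (A n) * ρ (A n) * (extendOp S O (A n))ᴴ))
      Filter.atTop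
      (nhds (sInf {r : ℝ | ∃ B : Finset ι, S ⊆ B ∧
        r = fidelity (ρ B) (extendOp S O B * ρ B * (extendOp S O B)ᴴ)})) := by
  classical
  set F : Finset ι → ℝ :=
    fun B => fidelity (ρ B) (extendOp S O B * ρ B * (extendOp S O B)ᴴ) with hF
  have hchain' : Monotone A := monotone_nat_of_le_succ hchain
  have hSn : ∀ n, S ⊆ A n := fun n => hS0.trans (hchain' (Nat.zero_le n))
  have hmono : ∀ {X Y : Finset ι}, S ⊆ X → X ⊆ Y → F Y ≤ F X := fun hSX hXY =>
    LocalFid.fidelity_mono ρ hpsd hcons S O hSX hXY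
  have hanti : Antitone (fun n => F (A n)) := fun i j hij => hmono (hSn i) (hchain' hij)
  have hTne : Set.Nonempty {r : ℝ | ∃ B : Finset ι, S ⊆ B ∧ r = F B} :=
    ⟨F S, S, le_refl S, rfl⟩
  have hTbdd : BddBelow {r : ℝ | ∃ B : Finset ι, S ⊆ B ∧ r = F B} := by
    refine ⟨0, ?_⟩
    rintro r ⟨B, hB, rfl⟩
    exact LocalFid.fidelity_nonneg _ _
  have hbdd : BddBelow (Set.range fun n => F (A n)) := by
    refine ⟨0, ?_⟩
    rintro r ⟨n, rfl⟩
    exact LocalFid.fidelity_nonneg _ _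
  have htend : Filter.Tendsto (fun n => F (A n)) Filter.atTop (nhds (⨅ n, F (A n))) :=
    tendsto_atTop_ciInf hanti hbdd
  have habs : ∀ B : Finset ι, ∃ n, B ⊆ A n := by
    intro B
    induction B using Finset.induction_on with
    | empty => exact ⟨0, Finset.empty_subset _⟩
    | @insert b B' hb ih =>
        obtain ⟨n1, h1⟩ := ih
        obtain ⟨n2, h2⟩ := hexh b
        refine ⟨max n1 n2, ?_⟩
        intro x hx
        rcases Finset.mem_insert.mp hx with rfl | hxB
        · exact hchain' (le_max_right n1 n2) h2
        · exact hchain' (le_max_left n1 n2) (h1 hxB)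
  have hinf : (⨅ n, F (A n)) = sInf {r : ℝ | ∃ B : Finset ι, S ⊆ B ∧ r = F B} := by
    apply le_antisymm
    · apply le_csInf hTne
      rintro r ⟨B, hSB, rfl⟩
      obtain ⟨n, hBn⟩ := habs B
      exact le_trans (ciInf_le hbdd n) (hmono hSB hBn)
    · apply le_ciInf
      intro n
      exact csInf_le hTbdd ⟨A n, hSn n, rfl⟩
  rw [← hinf]
  exact htend
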